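/- Let C_n be the cycle graph on n ≥ 3 vertices with symmetric arc set A (so |A| = 2n), let a ∈ A be a marked arc with sign function σ_a (value −1 on a, +1 elsewhere), and let U be the |A| × |A| matrix with entries U_{w,z} = σ_a(w⁻¹)σ_a(z)·δ_{o(w),t(z)} − δ_{w,z⁻¹}. Then for every non-negative integer τ and every arc w, the w-entry of U^τ applied to the normalized all-ones vector j = (1/√(2n))·𝟙 equals ±1/√(2n). In particular |(U^τ j)_a|² = 1/(2n). -/

import Mathlib

/-- The symmetric arc set of the cycle graph `C_n` on vertex set `ZMod n`:
arcs `(x, y)` with `y = x + 1` or `x = y + 1`. -/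
def CycleArc (n : ℕ) : Type :=
  {p : ZMod n × ZMod n // p.2 - p.1 = 1 ∨ p.1 - p.2 = 1}

instance (n : ℕ) [NeZero n] : Fintype (CycleArc n) := by
  unfold CycleArc; infer_instance

instance (n : ℕ) : DecidableEq (CycleArc n) := by
  unfold CycleArc; infer_instance

/-- The reversal `a⁻¹` of an arc. -/
def CycleArc.rev {n : ℕ} (w : CycleArc n) : CycleArc n :=
  ⟨(w.1.2, w.1.1), w.2.symm⟩

lemma two_ne_zero_zmod {n : ℕ} [NeZero n] (hn : 3 ≤ n) : (2 : ZMod n) ≠ 0 := by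
  intro h
  have h2 : ((2 : ℕ) : ZMod n) = 0 := by push_cast; exact h
  have := (CharP.cast_eq_zero_iff (ZMod n) n 2).mp h2
  have := Nat.le_of_dvd (by norm_num) this
  omega

lemma cycle_sum {n : ℕ} [NeZero n] (hn : 3 ≤ n) (x : ZMod n) (f : CycleArc n → ℝ) :
    ∑ z : CycleArc n, (if x = z.1.2 then f z else 0) =
      f ⟨(x - 1, x), Or.inl (by ring)⟩ + f ⟨(x + 1, x), Or.inr (by ring)⟩ := by
  have hne : (⟨(x - 1, x), Or.inl (by ring)⟩ : CycleArc n) ≠ ⟨(x + 1, x), Or.inr (by ring)⟩ := by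
    intro h
    have h1 : x - 1 = x + 1 := congrArg (fun z : CycleArc n => z.1.1) h
    exact two_ne_zero_zmod hn (by linear_combination -h1)
  rw [← Finset.sum_filter]
  have hset : Finset.univ.filter (fun z : CycleArc n => x = z.1.2) =
      {(⟨(x - 1, x), Or.inl (by ring)⟩ : CycleArc n), ⟨(x + 1, x), Or.inr (by ring)⟩} := by
    ext z
    simp only [Finset.mem_filter, Finset.mem_univ, true_and, Finset.mem_insert,
      Finset.mem_singleton]
    erw [Finset.mem_insert, Finset.mem_singleton]
    constructor
    · intro h
      rcases z.2 with h1 | h1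
      · left
        apply Subtype.ext
        have : z.1.1 = x - 1 := by linear_combination -h1 - h
        exact Prod.ext this h.symm
      · right
        apply Subtype.ext
        have : z.1.1 = x + 1 := by linear_combination h1 - h
        exact Prod.ext this h.symm
    · rintro (rfl | rfl) <;> rfl
  rw [hset]
  exact Finset.sum_pair hne

lemma rev_rev {n : ℕ} (w : CycleArc n) : w.rev.rev = w := rfl

lemma step_aux {n : ℕ} [NeZero n] (hn : 3 ≤ n) (a : CycleArc n) (c : ℝ)
    (v : CycleArc n → ℝ) (hv : ∀ u, v u = c ∨ v u = -c) (w : CycleArc n) :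
    (Matrix.of fun w z : CycleArc n =>
      (if w.rev = a then (-1:ℝ) else 1) * (if z = a then (-1:ℝ) else 1) *
        (if w.1.1 = z.1.2 then 1 else 0) - (if w = z.rev then 1 else 0)).mulVec v w = c ∨
    (Matrix.of fun w z : CycleArc n =>
      (if w.rev = a then (-1:ℝ) else 1) * (if z = a then (-1:ℝ) else 1) *
        (if w.1.1 = z.1.2 then 1 else 0) - (if w = z.rev then 1 else 0)).mulVec v w = -c := by
  set σ : CycleArc n → ℝ := fun u => if u = a then (-1:ℝ) else 1 with hσ
  have hσval : ∀ u, σ u = 1 ∨ σ u = -1 := by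
    intro u; by_cases h : u = a <;> simp [hσ, h]
  have hσsq : ∀ u, σ u * σ u = 1 := by
    intro u; rcases hσval u with h | h <;> rw [h] <;> ring
  have hrev : ∀ z : CycleArc n, (w = z.rev) ↔ (w.rev = z) := by
    intro z
    constructor
    · rintro rfl; rfl
    · rintro rfl; rfl
  have hmv : (Matrix.of fun w z : CycleArc n =>
      σ w.rev * σ z * (if w.1.1 = z.1.2 then 1 else 0) - (if w = z.rev then 1 else 0)).mulVec v w
      = (∑ z : CycleArc n, (if w.1.1 = z.1.2 then σ w.rev * σ z * v z else 0)) - v w.rev := by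
    simp only [Matrix.mulVec, dotProduct, Matrix.of_apply, sub_mul]
    rw [Finset.sum_sub_distrib]
    congr 1
    · apply Finset.sum_congr rfl
      intro z _
      split <;> simp
    · rw [Finset.sum_congr rfl (fun z _ => by
        show (if w = z.rev then (1:ℝ) else 0) * v z = if w.rev = z then v z else 0
        by_cases hz : w.rev = z
        · rw [if_pos ((hrev z).mpr hz), if_pos hz]; ring
        · rw [if_neg (fun hh => hz ((hrev z).mp hh)), if_neg hz]; ring)]
      simp
  rw [hmv, cycle_sum hn w.1.1 (fun z => σ w.rev * σ z * v z)]
  set z1 : CycleArc n := ⟨(w.1.1 - 1, w.1.1), Or.inl (by ring)⟩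
  set z2 : CycleArc n := ⟨(w.1.1 + 1, w.1.1), Or.inr (by ring)⟩
  have hwrev : w.rev = z2 ∨ w.rev = z1 := by
    rcases w.2 with h | h
    · left
      apply Subtype.ext
      refine Prod.ext ?_ rfl
      show w.1.2 = w.1.1 + 1
      linear_combination h
    · right
      apply Subtype.ext
      refine Prod.ext ?_ rfl
      show w.1.2 = w.1.1 - 1
      linear_combination -h
  rcases hwrev with h | h
  · rw [h, hσsq]
    have : σ z2 * σ z1 * v z1 + 1 * v z2 - v z2 = σ z2 * σ z1 * v z1 := by ring
    rw [this]
    rcases hσval z1 with h1 | h1 <;> rcases hσval z2 with h2 | h2 <;>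
      rcases hv z1 with h3 | h3 <;> rw [h1, h2, h3] <;> first | (left; ring1) | (right; ring1)
  · rw [h, hσsq]
    have : 1 * v z1 + σ z1 * σ z2 * v z2 - v z1 = σ z1 * σ z2 * v z2 := by ring
    rw [this]
    rcases hσval z1 with h1 | h1 <;> rcases hσval z2 with h2 | h2 <;>
      rcases hv z2 with h3 | h3 <;> rw [h1, h2, h3] <;> first | (left; ring1) | (right; ring1)

theorem cycle_arc_search (n : ℕ) [NeZero n] (hn : 3 ≤ n) (a : CycleArc n) :
    let σ : CycleArc n → ℝ := fun w => if w = a then -1 else 1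
    let U : Matrix (CycleArc n) (CycleArc n) ℝ := Matrix.of fun w z =>
      σ w.rev * σ z * (if w.1.1 = z.1.2 then 1 else 0) - (if w = z.rev then 1 else 0)
    let j : CycleArc n → ℝ := fun _ => 1 / Real.sqrt (2 * n)
    (∀ (τ : ℕ) (w : CycleArc n),
        (U ^ τ).mulVec j w = 1 / Real.sqrt (2 * n) ∨
          (U ^ τ).mulVec j w = -(1 / Real.sqrt (2 * n))) ∧
      ∀ τ : ℕ, |(U ^ τ).mulVec j a| ^ 2 = 1 / (2 * n) := by
  intro σ U j
  set c : ℝ := 1 / Real.sqrt (2 * n) with hc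
  have key : ∀ (τ : ℕ) (w : CycleArc n),
      (U ^ τ).mulVec j w = c ∨ (U ^ τ).mulVec j w = -c := by
    intro τ
    induction τ with
    | zero => intro w; left; simp [j, hc]
    | succ t ih =>
      intro w
      rw [pow_succ', ← Matrix.mulVec_mulVec]
      exact step_aux hn a c ((U ^ t).mulVec j) ih w
  refine ⟨key, fun τ => ?_⟩
  have hpos : (0:ℝ) < 2 * n := by
    have : (0:ℝ) < (n:ℝ) := by positivity
    linarith
  have hcsq : |c| ^ 2 = 1 / (2 * n) := by
    rw [sq_abs, hc, div_pow, one_pow, Real.sq_sqrt hpos.le]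
  rcases key τ a with h | h <;> rw [h]
  · exact hcsq
  · rw [abs_neg]; exact hcsq
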